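/- arXiv:0803.3060 — 3 statements merged into one kernel-verified Lean document; each statement's English description precedes it below -/
import Mathlib

section
/- Let n ≥ 1 and d ≥ 1. For each h > 0 let U(h) be a unitary complex matrix of size n(d+1), viewed as a (d+1)×(d+1) block matrix with n×n blocks U_{ji}(h) for i,j ∈ {0,…,d} (so that U(h)(η⊗e_0) = Σ_j U_{j0}(h)η ⊗ e_j for the standard basis (e_i) of ℂ^{d+1}). Suppose there exist n×n matrices K and L_1,…,L_d such that, as h → 0⁺, (U_{00}(h) − I − hK)/h → 0 and, for each i ∈ {1,…,d}, (U_{i0}(h) − √h·L_i)/√h → 0. Then there exists a Hermitian n×n matrix H₀ such that for every n×n matrix X, lim_{h→0⁺} ( (Σ_{i=0}^d U_{i0}(h)* X U_{i0}(h)) − X ) / h = i[H₀, X] + (1/2)Σ_{i=1}^d ( 2 L_i* X L_i − X L_i* L_i − L_i* L_i X ), where [A,B] = AB − BA. -/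
open Matrix Filter
open scoped Topology

noncomputable section

lemma key_limit {n d : ℕ}
    (blk : ℝ → Fin (d + 1) → Fin (d + 1) → Matrix (Fin n) (Fin n) ℂ)
    (K : Matrix (Fin n) (Fin n) ℂ) (L : Fin d → Matrix (Fin n) (Fin n) ℂ)
    (hK : Tendsto (fun h : ℝ => (h : ℂ)⁻¹ • (blk h 0 0 - 1 - (h : ℂ) • K))
      (𝓝[>] (0 : ℝ)) (𝓝 0))
    (hL : ∀ i : Fin d,
      Tendsto (fun h : ℝ => ((Real.sqrt h : ℂ))⁻¹ •
          (blk h i.succ 0 - (Real.sqrt h : ℂ) • L i))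
        (𝓝[>] (0 : ℝ)) (𝓝 0))
    (X : Matrix (Fin n) (Fin n) ℂ) :
    Tendsto (fun h : ℝ => (h : ℂ)⁻¹ •
        ((∑ i : Fin (d + 1), (blk h i 0)ᴴ * X * blk h i 0) - X))
      (𝓝[>] (0 : ℝ))
      (𝓝 (Kᴴ * X + X * K + ∑ i : Fin d, (L i)ᴴ * X * L i)) := by
  set a : ℝ → Matrix (Fin n) (Fin n) ℂ :=
    fun h => (h : ℂ)⁻¹ • (blk h 0 0 - 1 - (h : ℂ) • K) with ha_def
  set b : Fin d → ℝ → Matrix (Fin n) (Fin n) ℂ :=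
    fun i h => ((Real.sqrt h : ℂ))⁻¹ • (blk h i.succ 0 - (Real.sqrt h : ℂ) • L i) with hb_def
  set g : ℝ → Matrix (Fin n) (Fin n) ℂ := fun h =>
    ((K + a h)ᴴ * X + X * (K + a h) + (h : ℂ) • ((K + a h)ᴴ * X * (K + a h)))
      + ∑ i : Fin d, (L i + b i h)ᴴ * X * (L i + b i h) with hg_def
  have hc0 : Tendsto (fun h : ℝ => (h : ℂ)) (𝓝[>] (0 : ℝ)) (𝓝 0) := by
    have := (Complex.continuous_ofReal.tendsto 0).mono_left
      (nhdsWithin_le_nhds (s := Set.Ioi (0:ℝ)))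
    simpa using this
  have hMa : Tendsto (fun h => K + a h) (𝓝[>] (0 : ℝ)) (𝓝 K) := by
    simpa using tendsto_const_nhds.add hK
  have hconj : Continuous (fun M : Matrix (Fin n) (Fin n) ℂ => Mᴴ) :=
    continuous_id.matrix_conjTranspose
  have hMaH : Tendsto (fun h => (K + a h)ᴴ) (𝓝[>] (0 : ℝ)) (𝓝 Kᴴ) :=
    ((hconj.tendsto K).comp hMa)
  have hNb : ∀ i : Fin d, Tendsto (fun h => L i + b i h) (𝓝[>] (0 : ℝ)) (𝓝 (L i)) := by
    intro i; have := (tendsto_const_nhds (x := L i) (f := 𝓝[>] (0 : ℝ))).add (hL i); rw [add_zero] at this; exact this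
  have hg : Tendsto g (𝓝[>] (0 : ℝ))
      (𝓝 (Kᴴ * X + X * K + ∑ i : Fin d, (L i)ᴴ * X * L i)) := by
    have tA : Tendsto (fun h : ℝ => (K + a h)ᴴ * X) (𝓝[>] (0 : ℝ)) (𝓝 (Kᴴ * X)) :=
      hMaH.mul tendsto_const_nhds
    have tB : Tendsto (fun h : ℝ => X * (K + a h)) (𝓝[>] (0 : ℝ)) (𝓝 (X * K)) :=
      tendsto_const_nhds.mul hMa
    have tC0 : Tendsto (fun h : ℝ => (K + a h)ᴴ * X * (K + a h)) (𝓝[>] (0 : ℝ))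
        (𝓝 (Kᴴ * X * K)) := tA.mul hMa
    have tC : Tendsto (fun h : ℝ => (h : ℂ) • ((K + a h)ᴴ * X * (K + a h)))
        (𝓝[>] (0 : ℝ)) (𝓝 ((0 : ℂ) • (Kᴴ * X * K))) := hc0.smul tC0
    have h2 : Tendsto (fun h => ∑ i : Fin d, (L i + b i h)ᴴ * X * (L i + b i h))
        (𝓝[>] (0 : ℝ)) (𝓝 (∑ i : Fin d, (L i)ᴴ * X * L i)) := by
      refine tendsto_finset_sum _ fun i _ => ?_
      exact (((hconj.tendsto (L i)).comp (hNb i)).mul tendsto_const_nhds).mul (hNb i)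
    have := ((tA.add tB).add tC).add h2
    simpa only [zero_smul, add_zero] using this
  refine Tendsto.congr' ?_ hg
  filter_upwards [self_mem_nhdsWithin] with h (hh : 0 < h)
  have hcne : (h : ℂ) ≠ 0 := by exact_mod_cast hh.ne'
  have hsne : ((Real.sqrt h : ℝ) : ℂ) ≠ 0 := by
    exact_mod_cast (Real.sqrt_pos.mpr hh).ne'
  have hss : ((Real.sqrt h : ℝ) : ℂ) * ((Real.sqrt h : ℝ) : ℂ) = (h : ℂ) := by
    rw [← Complex.ofReal_mul, Real.mul_self_sqrt hh.le]
  have e0 : blk h 0 0 = 1 + (h : ℂ) • (K + a h) := by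
    have : (h : ℂ) • a h = blk h 0 0 - 1 - (h : ℂ) • K := smul_inv_smul₀ hcne _
    rw [smul_add, this]; abel
  have ei : ∀ i : Fin d, blk h i.succ 0 = ((Real.sqrt h : ℝ) : ℂ) • (L i + b i h) := by
    intro i
    have : ((Real.sqrt h : ℝ) : ℂ) • b i h
        = blk h i.succ 0 - ((Real.sqrt h : ℝ) : ℂ) • L i := smul_inv_smul₀ hsne _
    rw [smul_add, this]; abel
  have esum : ∑ i : Fin d, (blk h i.succ 0)ᴴ * X * blk h i.succ 0
      = ∑ i : Fin d, (h : ℂ) • ((L i + b i h)ᴴ * X * (L i + b i h)) := by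
    refine Finset.sum_congr rfl fun i _ => ?_
    rw [ei i, Matrix.conjTranspose_smul, Complex.star_def, Complex.conj_ofReal,
      smul_mul_assoc, smul_mul_assoc, Matrix.mul_smul, smul_smul, hss]
  rw [hg_def]
  simp only [Fin.sum_univ_succ, e0, esum]
  rw [← Finset.smul_sum]
  have expand : (1 + (h : ℂ) • (K + a h))ᴴ * X * (1 + (h : ℂ) • (K + a h))
      + (h : ℂ) • ∑ i : Fin d, (L i + b i h)ᴴ * X * (L i + b i h) - X
      = (h : ℂ) • (((K + a h)ᴴ * X + X * (K + a h)
          + (h : ℂ) • ((K + a h)ᴴ * X * (K + a h)))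
        + ∑ i : Fin d, (L i + b i h)ᴴ * X * (L i + b i h)) := by
    rw [Matrix.conjTranspose_add, Matrix.conjTranspose_one, Matrix.conjTranspose_smul,
      Complex.star_def, Complex.conj_ofReal]
    simp only [add_mul, mul_add, one_mul, mul_one, smul_mul_assoc, Matrix.mul_smul,
      smul_smul, smul_add]
    abel
  rw [expand, inv_smul_smul₀ hcne]

lemma unit_sum {n d : ℕ}
    (U : Matrix (Fin n × Fin (d + 1)) (Fin n × Fin (d + 1)) ℂ)
    (hU : U ∈ Matrix.unitaryGroup (Fin n × Fin (d + 1)) ℂ)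
    (blk : Fin (d + 1) → Fin (d + 1) → Matrix (Fin n) (Fin n) ℂ)
    (hblk : ∀ (j i : Fin (d + 1)), blk j i = Matrix.of fun a b => U (a, j) (b, i)) :
    ∑ i : Fin (d + 1), (blk i 0)ᴴ * blk i 0 = 1 := by
  have h1 : star U * U = 1 := (Matrix.mem_unitaryGroup_iff'.mp hU)
  ext a b
  have key := congrFun (congrFun h1 (a, 0)) (b, 0)
  simp only [Matrix.mul_apply, Matrix.star_apply, Fintype.sum_prod_type] at key
  simp only [Matrix.sum_apply, Matrix.mul_apply, Matrix.conjTranspose_apply, hblk,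
    Matrix.of_apply, Matrix.star_apply]
  rw [Finset.sum_comm, key]
  simp [Matrix.one_apply, Prod.ext_iff]

lemma lindblad_alg {n d : ℕ} (K X : Matrix (Fin n) (Fin n) ℂ)
    (L : Fin d → Matrix (Fin n) (Fin n) ℂ)
    (hS : Kᴴ + K + ∑ i : Fin d, (L i)ᴴ * L i = 0) :
    Complex.I • (((Complex.I / 2) • (K - Kᴴ)) * X - X * ((Complex.I / 2) • (K - Kᴴ)))
      + (1 / 2 : ℂ) • ∑ i : Fin d,
        (2 • ((L i)ᴴ * X * L i) - X * (L i)ᴴ * L i - (L i)ᴴ * L i * X)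
      = Kᴴ * X + X * K + ∑ i : Fin d, (L i)ᴴ * X * L i := by
  have hS' : ∑ i : Fin d, (L i)ᴴ * L i = -(Kᴴ + K) := by
    rw [← eq_neg_of_add_eq_zero_right hS]
  have hsum : ∑ i : Fin d, (2 • ((L i)ᴴ * X * L i) - X * (L i)ᴴ * L i - (L i)ᴴ * L i * X)
      = 2 • (∑ i : Fin d, (L i)ᴴ * X * L i) - X * (-(Kᴴ + K)) - (-(Kᴴ + K)) * X := by
    rw [Finset.sum_sub_distrib, Finset.sum_sub_distrib, ← Finset.sum_nsmul]
    have e1 : ∑ x : Fin d, X * (L x)ᴴ * L x = ∑ x : Fin d, X * ((L x)ᴴ * L x) :=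
      Finset.sum_congr rfl fun i _ => mul_assoc _ _ _
    rw [e1, ← Finset.mul_sum, ← Finset.sum_mul, hS']
  rw [hsum]
  have hI : Complex.I * (Complex.I / 2) = -(1/2) := by
    rw [mul_div_assoc', Complex.I_mul_I]; ring
  rw [smul_mul_assoc, Matrix.mul_smul, ← smul_sub, smul_smul, hI]
  simp only [sub_mul, mul_sub, smul_sub, smul_add, neg_mul, mul_neg, neg_smul,
    add_mul, mul_add, neg_add_rev, sub_neg_eq_add]
  module

/-- Repeated-interaction limit theorem ([AP]): if the blocks of the unitaries `U(h)`
(in the block decomposition over `ℂ^n ⊗ ℂ^{d+1}`) satisfy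
`U₀₀(h) = I + hK + o(h)` and `U_{i0}(h) = √h Lᵢ + o(√h)`, then there is a Hermitian `H₀`
with `lim_{h→0⁺} (Σᵢ U_{i0}(h)* X U_{i0}(h) − X)/h
  = i[H₀,X] + ½ Σᵢ (2Lᵢ*XLᵢ − XLᵢ*Lᵢ − Lᵢ*LᵢX)` for every `X`. -/
theorem repeated_interaction_lindblad (n d : ℕ) (hn : 1 ≤ n) (hd : 1 ≤ d)
    (U : ℝ → Matrix (Fin n × Fin (d + 1)) (Fin n × Fin (d + 1)) ℂ)
    (hU : ∀ h : ℝ, 0 < h → U h ∈ Matrix.unitaryGroup (Fin n × Fin (d + 1)) ℂ)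
    (blk : ℝ → Fin (d + 1) → Fin (d + 1) → Matrix (Fin n) (Fin n) ℂ)
    (hblk : ∀ (h : ℝ) (j i : Fin (d + 1)), blk h j i = Matrix.of fun a b => U h (a, j) (b, i))
    (K : Matrix (Fin n) (Fin n) ℂ) (L : Fin d → Matrix (Fin n) (Fin n) ℂ)
    (hK : Tendsto (fun h : ℝ => (h : ℂ)⁻¹ • (blk h 0 0 - 1 - (h : ℂ) • K))
      (𝓝[>] (0 : ℝ)) (𝓝 0))
    (hL : ∀ i : Fin d,
      Tendsto (fun h : ℝ => ((Real.sqrt h : ℂ))⁻¹ •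
          (blk h i.succ 0 - (Real.sqrt h : ℂ) • L i))
        (𝓝[>] (0 : ℝ)) (𝓝 0)) :
    ∃ H0 : Matrix (Fin n) (Fin n) ℂ, H0.IsHermitian ∧
      ∀ X : Matrix (Fin n) (Fin n) ℂ,
        Tendsto (fun h : ℝ => (h : ℂ)⁻¹ •
            ((∑ i : Fin (d + 1), (blk h i 0)ᴴ * X * blk h i 0) - X))
          (𝓝[>] (0 : ℝ))
          (𝓝 (Complex.I • (H0 * X - X * H0) +
            (1 / 2 : ℂ) • ∑ i : Fin d,
              (2 • ((L i)ᴴ * X * L i) - X * (L i)ᴴ * L i - (L i)ᴴ * L i * X))) := by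
  -- derive the trace-preservation identity `Kᴴ + K + Σ Lᵢᴴ Lᵢ = 0`
  have hzero : (fun h : ℝ => (h : ℂ)⁻¹ •
      ((∑ i : Fin (d + 1), (blk h i 0)ᴴ * (1 : Matrix (Fin n) (Fin n) ℂ) * blk h i 0) - 1))
      =ᶠ[𝓝[>] (0 : ℝ)] (fun _ => 0) := by
    filter_upwards [self_mem_nhdsWithin] with h (hh : 0 < h)
    have := unit_sum (U h) (hU h hh) (blk h) (hblk h)
    simp only [mul_one, this, sub_self, smul_zero]
  have h0 : Tendsto (fun h : ℝ => (h : ℂ)⁻¹ •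
      ((∑ i : Fin (d + 1), (blk h i 0)ᴴ * (1 : Matrix (Fin n) (Fin n) ℂ) * blk h i 0) - 1))
      (𝓝[>] (0 : ℝ)) (𝓝 0) := by
    refine Tendsto.congr' hzero.symm tendsto_const_nhds
  have hkey1 := key_limit blk K L hK hL 1
  have hS : Kᴴ + K + ∑ i : Fin d, (L i)ᴴ * L i = 0 := by
    have := tendsto_nhds_unique hkey1 h0
    simpa using this
  refine ⟨(Complex.I / 2) • (K - Kᴴ), ?_, fun X => ?_⟩
  · show ((Complex.I / 2) • (K - Kᴴ))ᴴ = (Complex.I / 2) • (K - Kᴴ)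
    rw [Matrix.conjTranspose_smul, Matrix.conjTranspose_sub, Matrix.conjTranspose_conjTranspose,
      Complex.star_def]
    have : (starRingEnd ℂ) (Complex.I / 2) = -(Complex.I / 2) := by
      rw [map_div₀, Complex.conj_I, map_ofNat]; ring
    rw [this]
    module
  · rw [lindblad_alg K X L hS]
    exact key_limit blk K L hK hL X
end
end

section
/- For every N ≥ 1, the total magnetization operator H^{(S)} := Σ_{k=1}^N σz^{(k)} commutes with the chain Hamiltonian H_S, i.e. H^{(S)}·H_S = H_S·H^{(S)} as 2^N×2^N matrices. -/
open Matrix Complex Filter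
open scoped Kronecker Topology ComplexOrder

noncomputable section

/-- The `N`-spin configuration space index: `(ℂ²)^{⊗N}` is identified with
functions `Fin N → Fin 2 → ℂ`, so `2^N × 2^N` matrices are indexed by `Fin N → Fin 2`. -/
abbrev Spin (N : ℕ) := Fin N → Fin 2

def sx : Matrix (Fin 2) (Fin 2) ℂ := !![0, 1; 1, 0]
def sy : Matrix (Fin 2) (Fin 2) ℂ := !![0, -Complex.I; Complex.I, 0]
def sz : Matrix (Fin 2) (Fin 2) ℂ := !![1, 0; 0, -1]
def sp : Matrix (Fin 2) (Fin 2) ℂ := !![0, 1; 0, 0]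
def sm : Matrix (Fin 2) (Fin 2) ℂ := !![0, 0; 1, 0]
def np : Matrix (Fin 2) (Fin 2) ℂ := !![1, 0; 0, 0]
def nm : Matrix (Fin 2) (Fin 2) ℂ := !![0, 0; 0, 1]

/-- `M^{(k)} = I ⊗ ... ⊗ M ⊗ ... ⊗ I`: the 2×2 matrix `M` acting at site `k`
of the chain, under the iterated Kronecker identification. -/
def site {N : ℕ} (k : Fin N) (M : Matrix (Fin 2) (Fin 2) ℂ) :
    Matrix (Spin N) (Spin N) ℂ :=
  Matrix.of fun x y => ∏ j : Fin N, if j = k then M (x j) (y j) else if x j = y j then 1 else 0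

/-- The XY spin-chain Hamiltonian
`H_S = Σ_{k=1}^N σz^{(k)} + Σ_{k=1}^{N-1} (σx^{(k)}σx^{(k+1)} + σy^{(k)}σy^{(k+1)})`. -/
def HS (N : ℕ) : Matrix (Spin N) (Spin N) ℂ :=
  (∑ k : Fin N, site k sz) +
    ∑ k : Fin N, ∑ l : Fin N,
      if (l : ℕ) = (k : ℕ) + 1 then site k sx * site l sx + site k sy * site l sy else 0

/-- `β₀ = e^{-β}/(e^{-β}+e^{β})`. -/
def b0 (β : ℝ) : ℝ := Real.exp (-β) / (Real.exp (-β) + Real.exp β)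

/-- `β₁ = e^{β}/(e^{-β}+e^{β})`. -/
def b1 (β : ℝ) : ℝ := Real.exp β / (Real.exp (-β) + Real.exp β)

/-- The single-spin Gibbs state `ρ_β = diag(β₀, β₁)`. -/
def rhoB (β : ℝ) : Matrix (Fin 2) (Fin 2) ℂ := !![(b0 β : ℂ), 0; 0, (b1 β : ℂ)]

/-- Heisenberg-picture dissipator at site `k`, inverse temperature `β`:
`2β₀(2σ₋^{(k)}Xσ₊^{(k)} − {n₋^{(k)},X}) + 2β₁(2σ₊^{(k)}Xσ₋^{(k)} − {n₊^{(k)},X})`. -/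
def dissAt {N : ℕ} (k : Fin N) (β : ℝ) (X : Matrix (Spin N) (Spin N) ℂ) :
    Matrix (Spin N) (Spin N) ℂ :=
  (2 * b0 β : ℂ) • (2 • (site k sm * X * site k sp) - (site k nm * X + X * site k nm)) +
    (2 * b1 β : ℂ) • (2 • (site k sp * X * site k sm) - (site k np * X + X * site k np))

/-- Schrödinger-picture (adjoint) dissipator at site `k`:
`2β₀(2σ₊^{(k)}ρσ₋^{(k)} − {n₋^{(k)},ρ}) + 2β₁(2σ₋^{(k)}ρσ₊^{(k)} − {n₊^{(k)},ρ})`. -/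
def dissStarAt {N : ℕ} (k : Fin N) (β : ℝ) (ρ : Matrix (Spin N) (Spin N) ℂ) :
    Matrix (Spin N) (Spin N) ℂ :=
  (2 * b0 β : ℂ) • (2 • (site k sp * ρ * site k sm) - (site k nm * ρ + ρ * site k nm)) +
    (2 * b1 β : ℂ) • (2 • (site k sm * ρ * site k sp) - (site k np * ρ + ρ * site k np))

/-- The two-bath Lindblad generator (Heisenberg picture), baths at sites `k` and `l`. -/
def Ltwo {N : ℕ} (k l : Fin N) (β β' : ℝ) (X : Matrix (Spin N) (Spin N) ℂ) :
    Matrix (Spin N) (Spin N) ℂ :=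
  Complex.I • (HS N * X - X * HS N) + dissAt k β X + dissAt l β' X

/-- The two-bath adjoint Lindblad generator, baths at sites `k` and `l`. -/
def LtwoStar {N : ℕ} (k l : Fin N) (β β' : ℝ) (ρ : Matrix (Spin N) (Spin N) ℂ) :
    Matrix (Spin N) (Spin N) ℂ :=
  (-Complex.I) • (HS N * ρ - ρ * HS N) + dissStarAt k β ρ + dissStarAt l β' ρ

/-- The `N`-fold Kronecker product `ρ_β ⊗ ... ⊗ ρ_β` under the iterated-Kronecker
identification. -/
def prodState (N : ℕ) (β : ℝ) : Matrix (Spin N) (Spin N) ℂ :=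
  Matrix.of fun x y => ∏ j : Fin N, rhoB β (x j) (y j)

/-- A density matrix: Hermitian positive semidefinite with trace 1. -/
def IsDensityMatrix {n : Type*} [Fintype n] [DecidableEq n] (ρ : Matrix n n ℂ) : Prop :=
  ρ.IsHermitian ∧ ρ.PosSemidef ∧ ρ.trace = 1

def prodOp {N : ℕ} (f : Fin N → Matrix (Fin 2) (Fin 2) ℂ) : Matrix (Spin N) (Spin N) ℂ :=
  Matrix.of fun x y => ∏ j : Fin N, f j (x j) (y j)

lemma site_eq_prodOp {N : ℕ} (k : Fin N) (M : Matrix (Fin 2) (Fin 2) ℂ) :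
    site k M = prodOp (fun j => if j = k then M else 1) := by
  ext x y
  show (∏ j, if j = k then M (x j) (y j) else if x j = y j then 1 else 0)
      = ∏ j, (if j = k then M else 1) (x j) (y j)
  refine Finset.prod_congr rfl fun j _ => ?_
  by_cases h : j = k
  · simp [h]
  · simp [h, Matrix.one_apply]

lemma prodOp_mul {N : ℕ} (f g : Fin N → Matrix (Fin 2) (Fin 2) ℂ) :
    prodOp f * prodOp g = prodOp (fun j => f j * g j) := by
  ext x y
  show ∑ z : Spin N, (∏ j, f j (x j) (z j)) * (∏ j, g j (z j) (y j))
      = ∏ j, (f j * g j) (x j) (y j)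
  simp_rw [← Finset.prod_mul_distrib, Matrix.mul_apply]
  rw [Finset.prod_univ_sum, Fintype.piFinset_univ]

lemma site_mul_same {N : ℕ} (k : Fin N) (A B : Matrix (Fin 2) (Fin 2) ℂ) :
    site k A * site k B = site k (A * B) := by
  rw [site_eq_prodOp, site_eq_prodOp, prodOp_mul, site_eq_prodOp]
  have : (fun j => (if j = k then A else 1) * if j = k then B else 1)
      = fun j : Fin N => if j = k then A * B else 1 := by
    funext j; split_ifs <;> simp
  rw [this]

lemma site_comm {N : ℕ} {k l : Fin N} (h : k ≠ l) (A B : Matrix (Fin 2) (Fin 2) ℂ) :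
    site k A * site l B = site l B * site k A := by
  rw [site_eq_prodOp, site_eq_prodOp, prodOp_mul, prodOp_mul]
  have : (fun j => (if j = k then A else 1) * if j = l then B else 1)
      = fun j : Fin N => (if j = l then B else 1) * if j = k then A else 1 := by
    funext j
    by_cases hk : j = k <;> by_cases hl : j = l
    · exact absurd (hk.symm.trans hl) h
    all_goals simp [hk, hl, h, Ne.symm h]
  rw [this]

lemma site_smul {N : ℕ} (k : Fin N) (c : ℂ) (M : Matrix (Fin 2) (Fin 2) ℂ) :
    site k (c • M) = c • site k M := by
  ext x y
  show (∏ j, if j = k then (c • M) (x j) (y j) else if x j = y j then 1 else 0)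
      = c * ∏ j, if j = k then M (x j) (y j) else if x j = y j then 1 else 0
  rw [Finset.prod_eq_mul_prod_sdiff_singleton_of_mem (Finset.mem_univ k),
      Finset.prod_eq_mul_prod_sdiff_singleton_of_mem (Finset.mem_univ k)]
  have h : (∏ j ∈ Finset.univ \ {k},
        if j = k then (c • M) (x j) (y j) else if x j = y j then (1:ℂ) else 0)
      = ∏ j ∈ Finset.univ \ {k},
        if j = k then M (x j) (y j) else if x j = y j then (1:ℂ) else 0 := by
    refine Finset.prod_congr rfl fun j hj => ?_
    simp only [Finset.mem_sdiff, Finset.mem_singleton] at hj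
    simp [hj.2]
  rw [h]
  simp [Matrix.smul_apply]
  ring

lemma sz_mul_sx : sz * sx = Complex.I • sy := by
  ext i j; fin_cases i <;> fin_cases j <;>
    simp [sz, sx, sy, Matrix.mul_apply, Fin.sum_univ_two] <;> ring

lemma sx_mul_sz : sx * sz = (-Complex.I) • sy := by
  ext i j; fin_cases i <;> fin_cases j <;>
    simp [sz, sx, sy, Matrix.mul_apply, Fin.sum_univ_two] <;> ring

lemma sz_mul_sy : sz * sy = (-Complex.I) • sx := by
  ext i j; fin_cases i <;> fin_cases j <;>
    simp [sz, sx, sy, Matrix.mul_apply, Fin.sum_univ_two] <;> ring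

lemma sy_mul_sz : sy * sz = Complex.I • sx := by
  ext i j; fin_cases i <;> fin_cases j <;>
    simp [sz, sx, sy, Matrix.mul_apply, Fin.sum_univ_two] <;> ring

lemma left_zero {N : ℕ} {k l : Fin N} (h : k ≠ l) :
    site k sz * (site k sx * site l sx + site k sy * site l sy)
      + site l sz * (site k sx * site l sx + site k sy * site l sy) = 0 := by
  have hlk : l ≠ k := h.symm
  have e1 : site k sz * (site k sx * site l sx)
      = Complex.I • (site k sy * site l sx) := by
    rw [← mul_assoc, site_mul_same, sz_mul_sx, site_smul, smul_mul_assoc]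
  have e2 : site k sz * (site k sy * site l sy)
      = (-Complex.I) • (site k sx * site l sy) := by
    rw [← mul_assoc, site_mul_same, sz_mul_sy, site_smul, smul_mul_assoc]
  have e3 : site l sz * (site k sx * site l sx)
      = Complex.I • (site k sx * site l sy) := by
    rw [← mul_assoc, site_comm hlk, mul_assoc, site_mul_same, sz_mul_sx, site_smul,
      mul_smul_comm]
  have e4 : site l sz * (site k sy * site l sy)
      = (-Complex.I) • (site k sy * site l sx) := by
    rw [← mul_assoc, site_comm hlk, mul_assoc, site_mul_same, sz_mul_sy, site_smul,
      mul_smul_comm]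
  rw [mul_add, mul_add, e1, e2, e3, e4]
  module

lemma right_zero {N : ℕ} {k l : Fin N} (h : k ≠ l) :
    (site k sx * site l sx + site k sy * site l sy) * site k sz
      + (site k sx * site l sx + site k sy * site l sy) * site l sz = 0 := by
  have hlk : l ≠ k := h.symm
  have f1 : (site k sx * site l sx) * site k sz
      = (-Complex.I) • (site k sy * site l sx) := by
    rw [mul_assoc, site_comm hlk, ← mul_assoc, site_mul_same, sx_mul_sz, site_smul,
      smul_mul_assoc]
  have f2 : (site k sy * site l sy) * site k sz
      = Complex.I • (site k sx * site l sy) := by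
    rw [mul_assoc, site_comm hlk, ← mul_assoc, site_mul_same, sy_mul_sz, site_smul,
      smul_mul_assoc]
  have f3 : (site k sx * site l sx) * site l sz
      = (-Complex.I) • (site k sx * site l sy) := by
    rw [mul_assoc, site_mul_same, sx_mul_sz, site_smul, mul_smul_comm]
  have f4 : (site k sy * site l sy) * site l sz
      = Complex.I • (site k sy * site l sx) := by
    rw [mul_assoc, site_mul_same, sy_mul_sz, site_smul, mul_smul_comm]
  rw [add_mul, add_mul, f1, f2, f3, f4]
  module

lemma z_comm {N : ℕ} {k l m : Fin N} (hmk : m ≠ k) (hml : m ≠ l) :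
    site m sz * (site k sx * site l sx + site k sy * site l sy)
      = (site k sx * site l sx + site k sy * site l sy) * site m sz := by
  have g : ∀ A B : Matrix (Fin 2) (Fin 2) ℂ,
      site m sz * (site k A * site l B) = (site k A * site l B) * site m sz := by
    intro A B
    rw [← mul_assoc, site_comm hmk, mul_assoc, site_comm hml, ← mul_assoc]
  rw [mul_add, add_mul, g, g]

lemma S_comm_T {N : ℕ} {k l : Fin N} (h : k ≠ l) :
    (∑ m : Fin N, site m sz) * (site k sx * site l sx + site k sy * site l sy)
      = (site k sx * site l sx + site k sy * site l sy) * ∑ m : Fin N, site m sz := by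
  set T := site k sx * site l sx + site k sy * site l sy with hT
  rw [Finset.sum_mul, Finset.mul_sum]
  rw [← sub_eq_zero, ← Finset.sum_sub_distrib]
  have hv : ∀ m ∈ (Finset.univ : Finset (Fin N)), m ∉ ({k, l} : Finset (Fin N)) →
      site m sz * T - T * site m sz = 0 := by
    intro m _ hm
    simp only [Finset.mem_insert, Finset.mem_singleton, not_or] at hm
    rw [z_comm hm.1 hm.2, sub_self]
  rw [← Finset.sum_subset (Finset.subset_univ ({k, l} : Finset (Fin N))) hv,
    Finset.sum_pair h, sub_add_sub_comm, left_zero h, right_zero h, sub_zero]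

/-- For every `N ≥ 1`, the total magnetization `H^{(S)} = Σ_k σz^{(k)}` commutes
with the chain Hamiltonian `H_S`. -/
theorem magnetization_commutes_with_HS (N : ℕ) (hN : 1 ≤ N) :
    (∑ k : Fin N, site k sz) * HS N = HS N * ∑ k : Fin N, site k sz := by
  set S := ∑ k : Fin N, site k sz with hS
  rw [HS, mul_add, add_mul]
  congr 1
  rw [Finset.mul_sum, Finset.sum_mul]
  refine Finset.sum_congr rfl fun k _ => ?_
  rw [Finset.mul_sum, Finset.sum_mul]
  refine Finset.sum_congr rfl fun l _ => ?_
  by_cases hcase : (l : ℕ) = (k : ℕ) + 1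
  · have hkl : k ≠ l := by
      intro e; rw [e] at hcase; omega
    simp only [hcase, if_true]
    exact S_comm_T hkl
  · simp [hcase]
end
end

section
/- Fix N ≥ 2 and β ∈ ℝ, and take β′ = β in the two-bath adjoint Lindblad generator L*. Then the product state ρ^β := ρ_β⊗ρ_β⊗…⊗ρ_β (N factors) is stationary: L*(ρ^β) = 0. -/
open Matrix Complex Filter
open scoped Kronecker Topology ComplexOrder

noncomputable section

def tens {N : ℕ} (F : Fin N → Matrix (Fin 2) (Fin 2) ℂ) : Matrix (Spin N) (Spin N) ℂ :=
  Matrix.of fun x y => ∏ j : Fin N, F j (x j) (y j)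

lemma tens_apply {N : ℕ} (F : Fin N → Matrix (Fin 2) (Fin 2) ℂ) (x y : Spin N) :
    tens F x y = ∏ j : Fin N, F j (x j) (y j) := rfl

lemma tens_mul {N : ℕ} (F G : Fin N → Matrix (Fin 2) (Fin 2) ℂ) :
    tens F * tens G = tens (fun j => F j * G j) := by
  ext x y
  simp only [Matrix.mul_apply, tens_apply]
  rw [← Fintype.piFinset_univ, Finset.prod_univ_sum (fun _ => (Finset.univ : Finset (Fin 2)))
    (fun j t => F j (x j) t * G j t (y j))]
  exact Finset.sum_congr rfl fun z _ => by rw [← Finset.prod_mul_distrib]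

lemma tens_update_apply {N : ℕ} (G : Fin N → Matrix (Fin 2) (Fin 2) ℂ) (k : Fin N)
    (A : Matrix (Fin 2) (Fin 2) ℂ) (x y : Spin N) :
    tens (Function.update G k A) x y
      = A (x k) (y k) * ∏ j ∈ Finset.univ.erase k, G j (x j) (y j) := by
  rw [tens_apply, ← Finset.mul_prod_erase Finset.univ _ (Finset.mem_univ k)]
  congr 1
  · simp
  · exact Finset.prod_congr rfl fun j hj => by
      rw [Function.update_of_ne (Finset.mem_erase.mp hj).1]

lemma tens_update_zero {N : ℕ} (G : Fin N → Matrix (Fin 2) (Fin 2) ℂ) (k : Fin N) :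
    tens (Function.update G k 0) = 0 := by
  ext x y; simp [tens_update_apply]

lemma tens_update2_apply {N : ℕ} (G : Fin N → Matrix (Fin 2) (Fin 2) ℂ) {k l : Fin N}
    (h : k ≠ l) (A B : Matrix (Fin 2) (Fin 2) ℂ) (x y : Spin N) :
    tens (Function.update (Function.update G k A) l B) x y
      = B (x l) (y l) * (A (x k) (y k) *
          ∏ j ∈ (Finset.univ.erase l).erase k, G j (x j) (y j)) := by
  rw [tens_apply, ← Finset.mul_prod_erase Finset.univ _ (Finset.mem_univ l)]
  congr 1
  · simp
  rw [← Finset.mul_prod_erase _ _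
      (Finset.mem_erase.mpr ⟨h, Finset.mem_univ k⟩)]
  congr 1
  · simp [Function.update_of_ne h]
  · exact Finset.prod_congr rfl fun j hj => by
      have h1 := (Finset.mem_erase.mp hj).1
      have h2 := (Finset.mem_erase.mp (Finset.mem_erase.mp hj).2).1
      rw [Function.update_of_ne h2, Function.update_of_ne h1]

lemma site_eq {N : ℕ} (k : Fin N) (M : Matrix (Fin 2) (Fin 2) ℂ) :
    site k M = tens (fun j => if j = k then M else 1) := by
  ext x y
  simp only [site, tens, Matrix.of_apply]
  refine Finset.prod_congr rfl fun j _ => ?_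
  by_cases h : j = k <;> simp [h, Matrix.one_apply]

lemma prodState_eq (N : ℕ) (β : ℝ) : prodState N β = tens (fun _ => rhoB β) := rfl

-- single-site dissipator fixed point, 2x2 level
lemma diss2 (β : ℝ) :
    (2 * b0 β : ℂ) • (2 • (sp * rhoB β * sm) - (nm * rhoB β + rhoB β * nm)) +
      (2 * b1 β : ℂ) • (2 • (sm * rhoB β * sp) - (np * rhoB β + rhoB β * np)) = 0 := by
  ext i j
  fin_cases i <;> fin_cases j <;>
    simp [Matrix.mul_apply, Fin.sum_univ_two, sp, sm, np, nm, rhoB] <;> ring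

lemma sz_comm (β : ℝ) : sz * rhoB β = rhoB β * sz := by
  ext i j
  fin_cases i <;> fin_cases j <;>
    simp [Matrix.mul_apply, Fin.sum_univ_two, sz, rhoB]

lemma hopId (β : ℝ) (a b c d : Fin 2) :
    (sx * rhoB β) a b * (sx * rhoB β) c d + (sy * rhoB β) a b * (sy * rhoB β) c d
      = (rhoB β * sx) a b * (rhoB β * sx) c d + (rhoB β * sy) a b * (rhoB β * sy) c d := by
  fin_cases a <;> fin_cases b <;> fin_cases c <;> fin_cases d <;>
    simp [Matrix.mul_apply, Fin.sum_univ_two, sx, sy, rhoB] <;> ring_nf <;>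
    simp [Complex.I_sq] <;> ring

lemma diss2' (β : ℝ) (a b : Fin 2) :
    (2 * b0 β : ℂ) * (2 * (sp * rhoB β * sm) a b - ((nm * rhoB β) a b + (rhoB β * nm) a b)) +
      (2 * b1 β : ℂ) * (2 * (sm * rhoB β * sp) a b - ((np * rhoB β) a b + (rhoB β * np) a b))
      = 0 := by
  fin_cases a <;> fin_cases b <;>
    simp [Matrix.mul_apply, Fin.sum_univ_two, sp, sm, np, nm, rhoB] <;> ring

lemma site_mul_prod {N : ℕ} (k : Fin N) (β : ℝ) (M : Matrix (Fin 2) (Fin 2) ℂ) :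
    site k M * prodState N β = tens (Function.update (fun _ => rhoB β) k (M * rhoB β)) := by
  rw [prodState_eq, site_eq, tens_mul]
  refine congrArg tens (funext fun j => ?_)
  by_cases h : j = k <;> simp [h, Function.update]

lemma prod_mul_site {N : ℕ} (k : Fin N) (β : ℝ) (M : Matrix (Fin 2) (Fin 2) ℂ) :
    prodState N β * site k M = tens (Function.update (fun _ => rhoB β) k (rhoB β * M)) := by
  rw [prodState_eq, site_eq, tens_mul]
  refine congrArg tens (funext fun j => ?_)
  by_cases h : j = k <;> simp [h, Function.update]

lemma site_mul_prod_mul_site {N : ℕ} (k : Fin N) (β : ℝ)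
    (M M' : Matrix (Fin 2) (Fin 2) ℂ) :
    site k M * prodState N β * site k M'
      = tens (Function.update (fun _ => rhoB β) k (M * rhoB β * M')) := by
  rw [site_mul_prod, site_eq, tens_mul]
  refine congrArg tens (funext fun j => ?_)
  by_cases h : j = k <;> simp [h, Function.update]

lemma site2_mul_prod {N : ℕ} {k l : Fin N} (h : k ≠ l) (β : ℝ)
    (M M' : Matrix (Fin 2) (Fin 2) ℂ) :
    site k M * site l M' * prodState N β
      = tens (Function.update (Function.update (fun _ => rhoB β) k (M * rhoB β))
          l (M' * rhoB β)) := by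
  rw [prodState_eq, site_eq, site_eq, tens_mul, tens_mul]
  refine congrArg tens (funext fun j => ?_)
  by_cases h1 : j = l
  · subst h1; simp [Function.update, (Ne.symm h)]
  · by_cases h2 : j = k <;> simp [h1, h2, h, Function.update]

lemma prod_mul_site2 {N : ℕ} {k l : Fin N} (h : k ≠ l) (β : ℝ)
    (M M' : Matrix (Fin 2) (Fin 2) ℂ) :
    prodState N β * (site k M * site l M')
      = tens (Function.update (Function.update (fun _ => rhoB β) k (rhoB β * M))
          l (rhoB β * M')) := by
  rw [← mul_assoc, prodState_eq, site_eq, site_eq, tens_mul, tens_mul]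
  refine congrArg tens (funext fun j => ?_)
  by_cases h1 : j = l
  · subst h1; simp [Function.update, (Ne.symm h)]
  · by_cases h2 : j = k <;> simp [h1, h2, h, Function.update]

lemma dissStar_zero {N : ℕ} (k : Fin N) (β : ℝ) :
    dissStarAt k β (prodState N β) = 0 := by
  unfold dissStarAt
  rw [site_mul_prod_mul_site, site_mul_prod_mul_site, site_mul_prod, site_mul_prod,
    prod_mul_site, prod_mul_site]
  ext x y
  simp only [Matrix.add_apply, Matrix.sub_apply, Matrix.smul_apply, Matrix.zero_apply,
    tens_update_apply, smul_eq_mul]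
  simp only [nsmul_eq_mul, Nat.cast_ofNat]
  set R := ∏ j ∈ Finset.univ.erase k, rhoB β (x j) (y j)
  linear_combination R * diss2' β (x k) (y k)

lemma hop_comm {N : ℕ} {k l : Fin N} (h : k ≠ l) (β : ℝ) :
    (site k sx * site l sx + site k sy * site l sy) * prodState N β
      = prodState N β * (site k sx * site l sx + site k sy * site l sy) := by
  rw [add_mul, mul_add, site2_mul_prod h, site2_mul_prod h, prod_mul_site2 h, prod_mul_site2 h]
  ext x y
  simp only [Matrix.add_apply, tens_update2_apply _ h]
  set R := ∏ j ∈ (Finset.univ.erase l).erase k, rhoB β (x j) (y j)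
  linear_combination R * hopId β (x k) (y k) (x l) (y l)

lemma HS_comm (N : ℕ) (β : ℝ) : HS N * prodState N β = prodState N β * HS N := by
  unfold HS
  rw [add_mul, mul_add, Finset.sum_mul, Finset.mul_sum, Finset.sum_mul, Finset.mul_sum]
  congr 1
  · exact Finset.sum_congr rfl fun k _ => by
      rw [site_mul_prod, prod_mul_site, sz_comm]
  · refine Finset.sum_congr rfl fun k _ => ?_
    rw [Finset.sum_mul, Finset.mul_sum]
    refine Finset.sum_congr rfl fun l _ => ?_
    by_cases hc : (l : ℕ) = (k : ℕ) + 1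
    · rw [if_pos hc]
      exact hop_comm (fun e => by rw [e] at hc; omega) β
    · rw [if_neg hc, zero_mul, mul_zero]


/-- At equal bath temperatures `β' = β`, the product state `ρ^β` is stationary
for the two-bath adjoint Lindblad generator (baths at sites `1` and `N`). -/
theorem prodState_stationary (N : ℕ) (hN : 2 ≤ N) (β : ℝ) :
    LtwoStar (⟨0, by omega⟩ : Fin N) (⟨N - 1, by omega⟩ : Fin N) β β (prodState N β) = 0 := by
  unfold LtwoStar
  rw [HS_comm, sub_self, smul_zero, dissStar_zero, dissStar_zero]
  simp
end
end
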